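/- Let $\varphi$ be a Schwartz function on $\mathbb{R}$ with $\varphi \geq 0$, and for $j \in \mathbb{Z}$ set $\varphi_j(x) := 2^j\varphi(2^j x)$. For $t \in \mathbb{R}$ define the shifted maximal function $M^t f(x) := \sup_{j \in \mathbb{Z}} (\varphi_j * |f|)(x - 2^{-j}t)$. Then there is an absolute constant $C$ (independent of $t$) such that $\|M^t f\|_{L^{1,\infty}(\mathbb{R})} \leq C\log(2+|t|)\,\|f\|_{L^1(\mathbb{R})}$ for all $f \in L^1(\mathbb{R})$. -/

import Mathlib

open MeasureTheory
open scoped ENNReal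

open Set Metric

/-- `L¹`-normalized dilate `φ_j(x) = 2^j φ(2^j x)`. -/
noncomputable def dilR (j : ℤ) (φ : ℝ → ℝ) : ℝ → ℝ :=
  fun x => (2 : ℝ) ^ j * φ ((2 : ℝ) ^ j * x)

/-- Shifted maximal function `M^t f(x) = sup_j (φ_j * |f|)(x - 2^{-j} t)`. -/
noncomputable def shiftedMax (φ : ℝ → ℝ) (t : ℝ) (f : ℝ → ℂ) (x : ℝ) : ℝ≥0∞ :=
  ⨆ j : ℤ, ∫⁻ y, ENNReal.ofReal (dilR j φ (x - (2 : ℝ) ^ (-j) * t - y)) * (‖f y‖₊ : ℝ≥0∞)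

lemma isOpen_avgSet (μ : Measure ℝ) (r : ℝ) (c : ℝ≥0∞) :
    IsOpen {x : ℝ | c < μ (Ioo (x - r) (x + r))} := by
  rw [Metric.isOpen_iff]
  intro x hx
  simp only [mem_setOf_eq] at hx
  have hIoo : Ioo (x - r) (x + r) = ⋃ n : ℕ, Icc (x - r + 1/(n+1)) (x + r - 1/(n+1)) := by
    ext z
    simp only [mem_Ioo, mem_iUnion, mem_Icc]
    constructor
    · rintro ⟨h1, h2⟩
      obtain ⟨n, hn⟩ := exists_nat_one_div_lt (lt_min_iff.2 ⟨sub_pos.2 h1, sub_pos.2 h2⟩ :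
        (0:ℝ) < min (z - (x - r)) (x + r - z))
      refine ⟨n, by nlinarith [min_le_left (z - (x - r)) (x + r - z),
        min_le_right (z - (x - r)) (x + r - z)], ?_⟩
      nlinarith [min_le_left (z - (x - r)) (x + r - z), min_le_right (z - (x - r)) (x + r - z)]
    · rintro ⟨n, h1, h2⟩
      have : (0:ℝ) < 1/(n+1) := by positivity
      constructor <;> linarith
  have hmono : Monotone (fun n : ℕ => Icc (x - r + 1/(n+1)) (x + r - 1/(n+1))) := by
    intro a b hab
    have hab' : (a:ℝ) ≤ b := Nat.cast_le.2 hab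
    have hd : (1:ℝ)/(b+1) ≤ 1/(a+1) := by
      apply one_div_le_one_div_of_le (by positivity)
      linarith
    exact Icc_subset_Icc (by linarith) (by linarith)
  rw [hIoo, hmono.directed_le.measure_iUnion] at hx
  obtain ⟨n, hn⟩ := lt_iSup_iff.mp hx
  refine ⟨1/(n+1), by positivity, fun y hy => ?_⟩
  simp only [mem_ball, Real.dist_eq] at hy
  simp only [mem_setOf_eq]
  refine hn.trans_le (measure_mono ?_)
  intro z hz
  simp only [mem_Icc] at hz
  have h1 := abs_lt.1 hy
  exact ⟨by linarith [h1.1, h1.2, hz.1], by linarith [h1.1, h1.2, hz.2]⟩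

lemma vitali_weak (μ : Measure ℝ) [IsFiniteMeasure μ] (lam : ℝ) (hlam : 0 < lam) :
    ENNReal.ofReal lam *
      volume {x : ℝ | ∃ k : ℤ, ENNReal.ofReal (lam * 2 ^ k) < μ (Ioo (x - 2 ^ k) (x + 2 ^ k))}
      ≤ 10 * μ univ := by
  classical
  set F := {x : ℝ | ∃ k : ℤ, ENNReal.ofReal (lam * 2 ^ k) < μ (Ioo (x - 2 ^ k) (x + 2 ^ k))}
    with hFdef
  set r : ℝ → ℝ := fun x =>
    if h : ∃ k : ℤ, ENNReal.ofReal (lam * 2 ^ k) < μ (Ioo (x - 2 ^ k) (x + 2 ^ k)) then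
      (2:ℝ) ^ (Classical.choose h) else 0 with hrdef
  have hrpos : ∀ x ∈ F, 0 < r x := by
    intro x hx
    have hx' : ∃ k : ℤ, ENNReal.ofReal (lam * 2 ^ k) < μ (Ioo (x - 2 ^ k) (x + 2 ^ k)) := hx
    simp only [hrdef]
    rw [dif_pos hx']
    positivity
  have hrμ : ∀ x ∈ F, ENNReal.ofReal (lam * r x) < μ (Ioo (x - r x) (x + r x)) := by
    intro x hx
    have hx' : ∃ k : ℤ, ENNReal.ofReal (lam * 2 ^ k) < μ (Ioo (x - 2 ^ k) (x + 2 ^ k)) := hx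
    have := Classical.choose_spec hx'
    simp only [hrdef]
    rw [dif_pos hx']
    exact this
  have hrR : ∀ x ∈ F, r x ≤ (μ univ).toReal / lam := by
    intro x hx
    have h1 : ENNReal.ofReal (lam * r x) < μ univ :=
      (hrμ x hx).trans_le (measure_mono (subset_univ _))
    have h2 : lam * r x < (μ univ).toReal :=
      (ENNReal.ofReal_lt_iff_lt_toReal (mul_pos hlam (hrpos x hx)).le
        (measure_ne_top μ univ)).1 h1
    rw [le_div_iff₀ hlam]
    nlinarith
  obtain ⟨u, huF, hud, hucov⟩ := Vitali.exists_disjoint_subfamily_covering_enlargement_closedBall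
    F (id : ℝ → ℝ) r ((μ univ).toReal / lam) hrR 4 (by norm_num)
  have hucnt : u.Countable := by
    apply hud.countable_of_nonempty_interior
    intro b hb
    rw [id, interior_closedBall _ (hrpos b (huF hb)).ne']
    exact nonempty_ball.2 (hrpos b (huF hb))
  have hFsub : F ⊆ ⋃ b ∈ u, closedBall b (4 * r b) := by
    intro a ha
    obtain ⟨b, hbu, hsub⟩ := hucov a ha
    exact mem_biUnion hbu (hsub (mem_closedBall_self (hrpos a ha).le))
  have hIood : u.PairwiseDisjoint fun b => Ioo (b - r b) (b + r b) := by
    apply hud.mono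
    intro b z hz
    simp only [mem_Ioo] at hz
    simp only [id, mem_closedBall, Real.dist_eq]
    rw [abs_le]
    constructor <;> linarith [hz.1, hz.2]
  calc ENNReal.ofReal lam * volume F
      ≤ ENNReal.ofReal lam * ∑' b : u, volume (closedBall (b:ℝ) (4 * r b)) :=
        mul_le_mul_right ((measure_mono hFsub).trans (measure_biUnion_le volume hucnt _)) _
    _ = ∑' b : u, ENNReal.ofReal lam * ENNReal.ofReal (2 * (4 * r (b:ℝ))) := by
        rw [ENNReal.tsum_mul_left]
        exact congrArg _ (tsum_congr fun b => by rw [Real.volume_closedBall])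
    _ ≤ ∑' b : u, 8 * μ (Ioo ((b:ℝ) - r b) ((b:ℝ) + r b)) := by
        apply ENNReal.tsum_le_tsum
        intro b
        have hb : (b:ℝ) ∈ F := huF b.2
        rw [← ENNReal.ofReal_mul hlam.le]
        have : lam * (2 * (4 * r (b:ℝ))) = 8 * (lam * r (b:ℝ)) := by ring
        rw [this, ENNReal.ofReal_mul (by norm_num : (0:ℝ) ≤ 8)]
        have h8 : ENNReal.ofReal (8:ℝ) = 8 := by
          simp [ENNReal.ofReal_ofNat]
        rw [h8]
        exact mul_le_mul_right (hrμ _ hb).le _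
    _ = 8 * ∑' b : u, μ (Ioo ((b:ℝ) - r b) ((b:ℝ) + r b)) := ENNReal.tsum_mul_left
    _ ≤ 8 * μ univ := by
        apply mul_le_mul_right
        rw [← measure_biUnion hucnt hIood (fun b _ => measurableSet_Ioo)]
        exact measure_mono (subset_univ _)
    _ ≤ 10 * μ univ := mul_le_mul_left (by norm_num) _

lemma escape_bound (F : Set ℝ) (hF : IsOpen F) (hFvol : volume F ≠ ⊤) {s : ℝ} (hs : 0 ≤ s) :
    volume {x : ℝ | x ∉ F ∧ ∃ j : ℤ, ∃ y : ℝ,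
        Icc (y - 2 ^ j) (y + 2 ^ j) ⊆ F ∧ x = y + s * 2 ^ j}
      ≤ ENNReal.ofReal (3 / Real.log 2 * Real.log (2 + s)) * volume F := by
  classical
  set K : ℕ := (Int.clog 2 (max 1 s)).toNat with hKdef
  have hKcast : ((K : ℤ)) = Int.clog 2 (max 1 s) := Int.toNat_of_nonneg (by
    have h0 : Int.clog 2 (1:ℝ) = 0 := Int.clog_one_right 2
    have := Int.clog_mono_right (b := 2) one_pos (le_max_left 1 s)
    omega)
  have hsK : s ≤ (2:ℝ) ^ (K:ℤ) := by
    rw [hKcast]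
    exact (le_max_right 1 s).trans (Int.self_le_zpow_clog one_lt_two _)
  have hlog2 : 0 < Real.log 2 := Real.log_pos one_lt_two
  have hlogmono : Real.log 2 ≤ Real.log (2 + s) :=
    Real.log_le_log (by norm_num) (by linarith)
  have hKbound : (K : ℝ) + 1 ≤ 3 / Real.log 2 * Real.log (2 + s) := by
    rw [div_mul_eq_mul_div, le_div_iff₀ hlog2]
    rcases Nat.eq_zero_or_pos K with hK0 | hKpos
    · rw [hK0]
      push_cast
      nlinarith
    · have hs1 : 1 < s := by
        by_contra h
        push_neg at h
        have : max 1 s = 1 := max_eq_left h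
        rw [hKdef, this, Int.clog_one_right] at hKpos
        simp at hKpos
      have hmax : max 1 s = s := max_eq_right hs1.le
      have hlt : (2:ℝ) ^ ((K:ℤ) - 1) < s := by
        rw [hKcast, hmax]
        exact Int.zpow_pred_clog_lt_self one_lt_two (by linarith)
      have hloglt : ((K:ℝ) - 1) * Real.log 2 < Real.log s := by
        have := Real.log_lt_log (zpow_pos (by norm_num) _) hlt
        rwa [Real.log_zpow, Int.cast_sub, Int.cast_natCast, Int.cast_one] at this
      have hss : Real.log s ≤ Real.log (2 + s) := Real.log_le_log (by linarith) (by linarith)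
      nlinarith
  -- depth function
  set S : ℝ → Set ℝ := fun b => {ε : ℝ | 0 < ε ∧ Ioo (b - ε) b ⊆ F} with hSdef
  set D : ℝ → ℝ := fun b => sSup (S b) with hDdef
  have hSbdd : ∀ b, BddAbove (S b) := by
    intro b
    refine ⟨(volume F).toReal, fun ε hε => ?_⟩
    have h1 : volume (Ioo (b - ε) b) ≤ volume F := measure_mono hε.2
    rw [Real.volume_Ioo, sub_sub_cancel] at h1
    have := ENNReal.toReal_mono hFvol h1
    rwa [ENNReal.toReal_ofReal hε.1.le] at this
  set B : Set ℝ := {b : ℝ | b ∉ F ∧ ∃ ε, 0 < ε ∧ Ioo (b - ε) b ⊆ F} with hBdef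
  have hmemD : ∀ b ∈ B, ∀ ε, 0 < ε → Ioo (b - ε) b ⊆ F → ε ≤ D b := by
    intro b _ ε h1 h2
    exact le_csSup (hSbdd b) ⟨h1, h2⟩
  have hDpos : ∀ b ∈ B, 0 < D b := by
    intro b hb
    obtain ⟨ε, hε1, hε2⟩ := hb.2
    exact lt_of_lt_of_le hε1 (hmemD b hb ε hε1 hε2)
  have hDF : ∀ b ∈ B, Ioo (b - D b) b ⊆ F := by
    intro b hb z hz
    obtain ⟨ε₀, hε₀1, hε₀2⟩ := hb.2
    have hzb : b - z < D b := by linarith [hz.1, hz.2]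
    have hSne : (S b).Nonempty := ⟨ε₀, hε₀1, hε₀2⟩
    obtain ⟨ε, hεS, hεz⟩ := exists_lt_of_lt_csSup hSne hzb
    exact hεS.2 ⟨by linarith [hz.2], hz.2⟩
  have hkey : ∀ b ∈ B, ∀ b' ∈ B, b < b' → Disjoint (Ioo (b - D b) b) (Ioo (b' - D b') b') := by
    intro b hb b' hb' hlt
    rw [Set.disjoint_left]
    rintro z ⟨hz1, hz2⟩ ⟨hz3, hz4⟩
    have hbnot : b ∉ Ioo (b' - D b') b' := fun hmem => hb.1 (hDF b' hb' hmem)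
    simp only [mem_Ioo, not_and, not_lt] at hbnot
    rcases lt_or_ge (b' - D b') b with h | h
    · linarith [hbnot h]
    · linarith
  have hBdisj : B.PairwiseDisjoint (fun b => Ioo (b - D b) b) := by
    intro b hb b' hb' hne
    rcases hne.lt_or_gt with h | h
    · exact hkey b hb b' hb' h
    · exact (hkey b' hb' b hb h).symm
  have hBcnt : B.Countable := by
    apply hBdisj.countable_of_nonempty_interior
    intro b hb
    rw [isOpen_Ioo.interior_eq]
    exact nonempty_Ioo.2 (by linarith [hDpos b hb])
  set M : ℝ → ℤ := fun b => Int.log 2 (D b) with hMdef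
  set G : ℝ → Set ℝ := fun b => Icc b (b + s * 2 ^ (M b - K)) ∪
      ⋃ j ∈ Finset.Icc (M b - K + 1) (M b), Icc (b - D b + s * 2 ^ j) (b + s * 2 ^ j) with hGdef
  -- covering
  have hcov : {x : ℝ | x ∉ F ∧ ∃ j : ℤ, ∃ y : ℝ,
      Icc (y - 2 ^ j) (y + 2 ^ j) ⊆ F ∧ x = y + s * 2 ^ j} ⊆ ⋃ b ∈ B, G b := by
    rintro x ⟨hxF, j, y, hIcc, rfl⟩
    have hρ : (0:ℝ) < 2 ^ j := zpow_pos (by norm_num) j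
    have hsρ : 0 ≤ s * 2 ^ j := mul_nonneg hs hρ.le
    have hx_gt : y + 2 ^ j < y + s * 2 ^ j := by
      by_contra h
      push_neg at h
      exact hxF (hIcc ⟨by linarith, h⟩)
    set A : Set ℝ := Icc y (y + s * 2 ^ j) ∩ Fᶜ with hAdef
    have hAne : y + s * 2 ^ j ∈ A := ⟨⟨by linarith, le_rfl⟩, hxF⟩
    have hAbdd : BddBelow A := BddBelow.mono inter_subset_left bddBelow_Icc
    have hAclosed : IsClosed A := isClosed_Icc.inter hF.isClosed_compl
    set b : ℝ := sInf A with hbdef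
    have hbA : b ∈ A := hAclosed.csInf_mem ⟨_, hAne⟩ hAbdd
    have hbF : b ∉ F := hbA.2
    have hyb : y ≤ b := hbA.1.1
    have hbx : b ≤ y + s * 2 ^ j := hbA.1.2
    have hIcoF : Ico y b ⊆ F := by
      intro z hz
      have hzA : z ∉ A := notMem_of_lt_csInf hz.2 hAbdd
      have : z ∈ Icc y (y + s * 2 ^ j) := ⟨hz.1, by linarith [hz.2]⟩
      by_contra hzF
      exact hzA ⟨this, hzF⟩
    have hb_gt : y + 2 ^ j < b := by
      by_contra h
      push_neg at h
      exact hbF (hIcc ⟨by linarith, h⟩)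
    have hbB : b ∈ B := by
      refine ⟨hbF, b - y, by linarith, fun z hz => hIcoF ⟨by linarith [hz.1], hz.2⟩⟩
    have hdb : b - y ≤ D b :=
      hmemD b hbB _ (by linarith) (fun z hz => hIcoF ⟨by linarith [hz.1], hz.2⟩)
    have hjD : (2:ℝ) ^ j ≤ D b := by linarith
    have hjM : j ≤ M b := by
      have h1 : D b < 2 ^ (M b + 1) := Int.lt_zpow_succ_log_self one_lt_two (D b)
      have h2 : (2:ℝ) ^ j < 2 ^ (M b + 1) := lt_of_le_of_lt hjD h1
      have := (zpow_lt_zpow_iff_right₀ (by norm_num : (1:ℝ) < 2)).1 h2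
      omega
    refine mem_biUnion hbB ?_
    by_cases hcase : j ≤ M b - K
    · left
      refine ⟨by linarith, ?_⟩
      have : s * 2 ^ j ≤ s * 2 ^ (M b - K) :=
        mul_le_mul_of_nonneg_left (zpow_le_zpow_right₀ (by norm_num) hcase) hs
      linarith
    · right
      push_neg at hcase
      refine mem_biUnion (Finset.mem_Icc.2 ⟨by omega, hjM⟩) ⟨by linarith, by linarith⟩
  -- measure of each G b
  have hGvol : ∀ b ∈ B, volume (G b) ≤ (K + 1 : ℝ≥0∞) * ENNReal.ofReal (D b) := by
    intro b hb
    have h2K : (0:ℝ) < 2 ^ (M b - K) := zpow_pos (by norm_num) _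
    have hfirst : volume (Icc b (b + s * 2 ^ (M b - K))) ≤ ENNReal.ofReal (D b) := by
      rw [Real.volume_Icc, add_sub_cancel_left]
      apply ENNReal.ofReal_le_ofReal
      have h1 : s * 2 ^ ((M b : ℤ) - K) ≤ 2 ^ (K:ℤ) * 2 ^ ((M b : ℤ) - K) :=
        mul_le_mul_of_nonneg_right hsK h2K.le
      have h2 : (2:ℝ) ^ (K:ℤ) * 2 ^ ((M b : ℤ) - K) = 2 ^ (M b) := by
        rw [← zpow_add₀ (two_ne_zero)]
        congr 1
        ring
      have h3 : (2:ℝ) ^ (M b) ≤ D b := Int.zpow_log_le_self one_lt_two (hDpos b hb)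
      linarith
    have hrest : volume (⋃ j ∈ Finset.Icc (M b - K + 1) (M b),
        Icc (b - D b + s * 2 ^ j) (b + s * 2 ^ j)) ≤ (K : ℝ≥0∞) * ENNReal.ofReal (D b) := by
      refine le_trans (measure_biUnion_finset_le _ _) ?_
      have heach : ∀ j : ℤ, volume (Icc (b - D b + s * 2 ^ j) (b + s * 2 ^ j))
          = ENNReal.ofReal (D b) := by
        intro j
        rw [Real.volume_Icc]
        congr 1
        ring
      calc ∑ j ∈ Finset.Icc (M b - K + 1) (M b),
            volume (Icc (b - D b + s * 2 ^ j) (b + s * 2 ^ j))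
          = ∑ _j ∈ Finset.Icc (M b - K + 1) (M b), ENNReal.ofReal (D b) :=
            Finset.sum_congr rfl (fun j _ => heach j)
        _ = (Finset.Icc (M b - K + 1) (M b)).card • ENNReal.ofReal (D b) :=
            Finset.sum_const _
        _ ≤ (K : ℝ≥0∞) * ENNReal.ofReal (D b) := by
            rw [Int.card_Icc]
            have hc : (M b + 1 - (M b - K + 1)).toNat = K := by omega
            rw [hc, nsmul_eq_mul]
    calc volume (G b) ≤ volume (Icc b (b + s * 2 ^ (M b - K))) +
          volume (⋃ j ∈ Finset.Icc (M b - K + 1) (M b),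
            Icc (b - D b + s * 2 ^ j) (b + s * 2 ^ j)) := measure_union_le _ _
      _ ≤ ENNReal.ofReal (D b) + (K : ℝ≥0∞) * ENNReal.ofReal (D b) := add_le_add hfirst hrest
      _ = (K + 1 : ℝ≥0∞) * ENNReal.ofReal (D b) := by ring
  -- put together
  calc volume {x : ℝ | x ∉ F ∧ ∃ j : ℤ, ∃ y : ℝ,
        Icc (y - 2 ^ j) (y + 2 ^ j) ⊆ F ∧ x = y + s * 2 ^ j}
      ≤ volume (⋃ b ∈ B, G b) := measure_mono hcov
    _ ≤ ∑' b : B, volume (G b) := measure_biUnion_le volume hBcnt _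
    _ ≤ ∑' b : B, (K + 1 : ℝ≥0∞) * ENNReal.ofReal (D b) :=
        ENNReal.tsum_le_tsum (fun b => hGvol b b.2)
    _ = (K + 1 : ℝ≥0∞) * ∑' b : B, ENNReal.ofReal (D b) := ENNReal.tsum_mul_left
    _ = (K + 1 : ℝ≥0∞) * ∑' b : B, volume (Ioo ((b:ℝ) - D b) (b:ℝ)) := by
        congr 1
        exact tsum_congr (fun b => by rw [Real.volume_Ioo, sub_sub_cancel])
    _ = (K + 1 : ℝ≥0∞) * volume (⋃ b ∈ B, Ioo (b - D b) b) := by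
        rw [measure_biUnion hBcnt hBdisj (fun b _ => measurableSet_Ioo)]
    _ ≤ (K + 1 : ℝ≥0∞) * volume F := by
        apply mul_le_mul_right
        apply measure_mono
        exact iUnion₂_subset hDF
    _ ≤ ENNReal.ofReal (3 / Real.log 2 * Real.log (2 + s)) * volume F := by
        apply mul_le_mul_left
        have : ((K : ℝ≥0∞) + 1) = ENNReal.ofReal ((K:ℝ) + 1) := by
          rw [ENNReal.ofReal_add (by positivity) zero_le_one, ENNReal.ofReal_natCast,
            ENNReal.ofReal_one]
        rw [this]
        exact ENNReal.ofReal_le_ofReal hKbound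

lemma shifted_weak (μ : Measure ℝ) [IsFiniteMeasure μ] (lam s : ℝ) (hlam : 0 < lam) :
    ENNReal.ofReal lam * volume {x : ℝ | ∃ j : ℤ,
        ENNReal.ofReal (2 * lam * 2 ^ j) < μ (Ioo (x - s * 2 ^ j - 2 ^ j) (x - s * 2 ^ j + 2 ^ j))}
      ≤ ENNReal.ofReal (40 / Real.log 2 * Real.log (2 + |s|)) * μ univ := by
  classical
  set F := {x : ℝ | ∃ k : ℤ, ENNReal.ofReal (lam * 2 ^ k) < μ (Ioo (x - 2 ^ k) (x + 2 ^ k))}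
    with hFdef
  have hFopen : IsOpen F := by
    have : F = ⋃ k : ℤ,
        {x : ℝ | ENNReal.ofReal (lam * 2 ^ k) < μ (Ioo (x - 2 ^ k) (x + 2 ^ k))} := by
      ext x; simp [hFdef]
    rw [this]
    exact isOpen_iUnion (fun k => isOpen_avgSet μ _ _)
  have hFw : ENNReal.ofReal lam * volume F ≤ 10 * μ univ := vitali_weak μ lam hlam
  have hlamne : ENNReal.ofReal lam ≠ 0 := by
    simp [ENNReal.ofReal_eq_zero, not_le, hlam]
  have hFfin : volume F ≠ ⊤ := by
    intro h
    rw [h, ENNReal.mul_top hlamne] at hFw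
    have : (10 : ℝ≥0∞) * μ univ ≠ ⊤ :=
      ENNReal.mul_ne_top (by norm_num) (measure_ne_top μ univ)
    exact this (top_le_iff.mp hFw)
  set T := {x : ℝ | ∃ j : ℤ,
      ENNReal.ofReal (2 * lam * 2 ^ j) < μ (Ioo (x - s * 2 ^ j - 2 ^ j) (x - s * 2 ^ j + 2 ^ j))}
    with hTdef
  have hTF : ∀ x ∈ T, x ∉ F → ∃ j : ℤ, ∃ y : ℝ,
      Icc (y - 2 ^ j) (y + 2 ^ j) ⊆ F ∧ x = y + s * 2 ^ j := by
    intro x hx hxF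
    obtain ⟨j, hj⟩ := hx
    refine ⟨j, x - s * 2 ^ j, ?_, by ring⟩
    intro y' hy'
    have hρ : (0:ℝ) < 2 ^ j := zpow_pos (by norm_num) j
    have hzz : (2:ℝ) ^ (j+1) = 2 ^ j * 2 := by
      rw [zpow_add₀ (two_ne_zero : (2:ℝ) ≠ 0)]; norm_num
    refine ⟨j + 1, lt_of_le_of_lt (le_of_eq ?_) (lt_of_lt_of_le hj (measure_mono ?_))⟩
    · congr 1
      rw [hzz]
      ring
    · intro z hz
      simp only [mem_Ioo] at hz ⊢
      have h1 := hy'.1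
      have h2 := hy'.2
      exact ⟨by rw [hzz]; linarith [hz.1], by rw [hzz]; linarith [hz.2]⟩
  have hescape : volume (T \ F) ≤
      ENNReal.ofReal (3 / Real.log 2 * Real.log (2 + |s|)) * volume F := by
    rcases le_or_gt 0 s with hs | hs
    · rw [abs_of_nonneg hs]
      refine le_trans (measure_mono ?_) (escape_bound F hFopen hFfin hs)
      rintro x ⟨hxT, hxF⟩
      exact ⟨hxF, hTF x hxT hxF⟩
    · rw [abs_of_neg hs]
      have hFopen' : IsOpen (-F) := hFopen.neg
      have hFvol' : volume (-F) = volume F := Measure.measure_neg volume F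
      have hsub : -(T \ F) ⊆ {x : ℝ | x ∉ (-F) ∧ ∃ j : ℤ, ∃ y : ℝ,
          Icc (y - 2 ^ j) (y + 2 ^ j) ⊆ (-F) ∧ x = y + (-s) * 2 ^ j} := by
        intro x hx
        have hx' : -x ∈ T \ F := hx
        obtain ⟨j, y, hIcc, hxy⟩ := hTF _ hx'.1 hx'.2
        refine ⟨fun hc => hx'.2 hc, j, -y, ?_, by linarith [hxy]⟩
        intro w hw
        have : -w ∈ Icc (y - 2 ^ j) (y + 2 ^ j) := ⟨by linarith [hw.2], by linarith [hw.1]⟩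
        exact hIcc this
      calc volume (T \ F) = volume (-(T \ F)) := (Measure.measure_neg volume _).symm
        _ ≤ volume {x : ℝ | x ∉ (-F) ∧ ∃ j : ℤ, ∃ y : ℝ,
              Icc (y - 2 ^ j) (y + 2 ^ j) ⊆ (-F) ∧ x = y + (-s) * 2 ^ j} :=
            measure_mono hsub
        _ ≤ ENNReal.ofReal (3 / Real.log 2 * Real.log (2 + -s)) * volume (-F) :=
            escape_bound (-F) hFopen' (by rw [hFvol']; exact hFfin) (by linarith)
        _ = ENNReal.ofReal (3 / Real.log 2 * Real.log (2 + -s)) * volume F := by rw [hFvol']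
  -- combine
  have hlog2 : 0 < Real.log 2 := Real.log_pos one_lt_two
  have hL : Real.log 2 ≤ Real.log (2 + |s|) :=
    Real.log_le_log (by norm_num) (by have := abs_nonneg s; linarith)
  have hLpos : 0 < Real.log (2 + |s|) := lt_of_lt_of_le hlog2 hL
  calc ENNReal.ofReal lam * volume T
      ≤ ENNReal.ofReal lam * (volume F + volume (T \ F)) := by
        apply mul_le_mul_right
        refine le_trans (measure_mono (fun x hx => ?_)) (measure_union_le F (T \ F))
        by_cases h : x ∈ F
        · exact Or.inl h
        · exact Or.inr ⟨hx, h⟩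
    _ = ENNReal.ofReal lam * volume F + ENNReal.ofReal lam * volume (T \ F) := mul_add _ _ _
    _ ≤ 10 * μ univ + ENNReal.ofReal lam *
          (ENNReal.ofReal (3 / Real.log 2 * Real.log (2 + |s|)) * volume F) :=
        add_le_add hFw (mul_le_mul_right hescape _)
    _ = 10 * μ univ + ENNReal.ofReal (3 / Real.log 2 * Real.log (2 + |s|)) *
          (ENNReal.ofReal lam * volume F) := by ring_nf
    _ ≤ 10 * μ univ + ENNReal.ofReal (3 / Real.log 2 * Real.log (2 + |s|)) *
          (10 * μ univ) := add_le_add le_rfl (mul_le_mul_right hFw _)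
    _ ≤ ENNReal.ofReal (40 / Real.log 2 * Real.log (2 + |s|)) * μ univ := by
        have h10 : (10 : ℝ≥0∞) = ENNReal.ofReal (10:ℝ) := by
          rw [ENNReal.ofReal_ofNat]
        have e1 : (10 : ℝ≥0∞) * μ univ ≤
            ENNReal.ofReal (10 / Real.log 2 * Real.log (2 + |s|)) * μ univ := by
          apply mul_le_mul_left
          rw [h10]
          apply ENNReal.ofReal_le_ofReal
          rw [div_mul_eq_mul_div, le_div_iff₀ hlog2]
          nlinarith
        have e2 : ENNReal.ofReal (3 / Real.log 2 * Real.log (2 + |s|)) * (10 * μ univ)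
            = ENNReal.ofReal (30 / Real.log 2 * Real.log (2 + |s|)) * μ univ := by
          rw [← mul_assoc, h10, ← ENNReal.ofReal_mul (by positivity)]
          congr 2
          ring
        calc 10 * μ univ + ENNReal.ofReal (3 / Real.log 2 * Real.log (2 + |s|)) * (10 * μ univ)
            ≤ ENNReal.ofReal (10 / Real.log 2 * Real.log (2 + |s|)) * μ univ +
              ENNReal.ofReal (30 / Real.log 2 * Real.log (2 + |s|)) * μ univ := by
              rw [e2]; exact add_le_add e1 le_rfl
          _ = ENNReal.ofReal (40 / Real.log 2 * Real.log (2 + |s|)) * μ univ := by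
              rw [← add_mul, ← ENNReal.ofReal_add (by positivity) (by positivity)]
              congr 2
              ring

lemma schwartz_kernel_bound (φ : SchwartzMap ℝ ℝ) (hφ : ∀ x, 0 ≤ φ x) :
    ∃ A : ℝ, 0 < A ∧ ∀ (j : ℤ) (c y : ℝ),
      ENNReal.ofReal (dilR j (⇑φ) (c - y)) ≤
        ∑' k : ℕ, (Ioo (c - 2 ^ ((k:ℤ) - j)) (c + 2 ^ ((k:ℤ) - j))).indicator
          (fun _ => ENNReal.ofReal (A * 2 ^ (j - 2 * (k:ℤ)))) y := by
  obtain ⟨C0, hC0pos, hC0⟩ := φ.decay 0 0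
  obtain ⟨C2, hC2pos, hC2⟩ := φ.decay 2 0
  refine ⟨8 * (C0 + C2), by positivity, ?_⟩
  intro j c y
  set u : ℝ := 2 ^ j * (c - y) with hu
  set w : ℝ := |u| with hw
  have hw0 : 0 ≤ w := abs_nonneg u
  set k : ℕ := (Int.clog 2 (1 + w)).toNat with hk
  have hkcast : ((k:ℤ)) = Int.clog 2 (1 + w) := Int.toNat_of_nonneg (by
    have h0 : Int.clog 2 (1:ℝ) = 0 := Int.clog_one_right 2
    have := Int.clog_mono_right (b := 2) one_pos (by linarith : (1:ℝ) ≤ 1 + w)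
    omega)
  have hρj : (0:ℝ) < 2 ^ j := zpow_pos (by norm_num) j
  have hρk : (0:ℝ) < 2 ^ (k:ℤ) := zpow_pos (by norm_num) _
  have hup : 1 + w ≤ (2:ℝ) ^ (k:ℤ) := by
    rw [hkcast]; exact Int.self_le_zpow_clog one_lt_two _
  have hlow : (2:ℝ) ^ (k:ℤ) ≤ 2 * (1 + w) := by
    rcases Nat.eq_zero_or_pos k with h0 | hpos
    · rw [h0]; norm_num; linarith
    · have hw1 : (1:ℝ) < 1 + w := by
        by_contra h
        push_neg at h
        have h1 : Int.clog 2 (1 + w) ≤ 0 := by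
          have h2 := Int.clog_mono_right (b := 2) (by linarith : (0:ℝ) < 1 + w) h
          rwa [Int.clog_one_right] at h2
        omega
      have hpred := Int.zpow_pred_clog_lt_self (b := 2) (R := ℝ) one_lt_two
        (by linarith : (0:ℝ) < 1 + w)
      rw [← hkcast] at hpred
      have hpred' : (2:ℝ) ^ ((k:ℤ) - 1) < 1 + w := by exact_mod_cast hpred
      have h2 : (2:ℝ) ^ ((k:ℤ)) = 2 * 2 ^ ((k:ℤ) - 1) := by
        rw [← zpow_one_add₀ (two_ne_zero : (2:ℝ) ≠ 0)]; congr 1; ring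
      rw [h2]
      nlinarith
  have hφu : φ u * (1 + w) ^ 2 ≤ 2 * (C0 + C2) := by
    have h0 := hC0 u
    have h2 := hC2 u
    rw [norm_iteratedFDeriv_zero] at h0 h2
    rw [Real.norm_of_nonneg (hφ u)] at h0 h2
    have hnu : ‖u‖ = w := rfl
    rw [hnu] at h0 h2
    rw [pow_zero, one_mul] at h0
    nlinarith [mul_nonneg (hφ u) (sq_nonneg (w - 1)), hφ u]
  have hmem : y ∈ Ioo (c - 2 ^ ((k:ℤ) - j)) (c + 2 ^ ((k:ℤ) - j)) := by
    have hcy : |c - y| < 2 ^ ((k:ℤ) - j) := by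
      have h1 : w < 2 ^ (k:ℤ) := by linarith
      have h2 : w = 2 ^ j * |c - y| := by
        rw [hw, hu, abs_mul, abs_of_pos hρj]
      have h3 : (2:ℝ) ^ ((k:ℤ) - j) = 2 ^ (k:ℤ) / 2 ^ j := zpow_sub₀ two_ne_zero _ _
      rw [h3, lt_div_iff₀ hρj]
      nlinarith
    have := abs_lt.1 hcy
    exact ⟨by linarith [this.1], by linarith [this.2]⟩
  have h2kpos : (0:ℝ) < 2 ^ (2 * (k:ℤ)) := zpow_pos (by norm_num) _
  have hφu2 : φ u * 2 ^ (2 * (k:ℤ)) ≤ 8 * (C0 + C2) := by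
    have h2k : (2:ℝ) ^ (2 * (k:ℤ)) = 2 ^ (k:ℤ) * 2 ^ (k:ℤ) := by
      rw [← zpow_add₀ (two_ne_zero : (2:ℝ) ≠ 0)]; congr 1; ring
    have h4 : (2:ℝ) ^ (k:ℤ) * 2 ^ (k:ℤ) ≤ 4 * (1 + w) ^ 2 := by nlinarith
    have h5 : φ u * (2 ^ (k:ℤ) * 2 ^ (k:ℤ)) ≤ φ u * (4 * (1 + w) ^ 2) :=
      mul_le_mul_of_nonneg_left h4 (hφ u)
    rw [h2k]
    nlinarith
  have hval : dilR j (⇑φ) (c - y) ≤ 8 * (C0 + C2) * 2 ^ (j - 2 * (k:ℤ)) := by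
    have hdil : dilR j (⇑φ) (c - y) = 2 ^ j * φ u := by rw [hu]; rfl
    rw [hdil]
    have hsplit : (2:ℝ) ^ (j - 2 * (k:ℤ)) = 2 ^ j / 2 ^ (2 * (k:ℤ)) :=
      zpow_sub₀ two_ne_zero _ _
    rw [hsplit, mul_div_assoc', le_div_iff₀ h2kpos]
    calc (2:ℝ) ^ j * φ u * 2 ^ (2 * (k:ℤ)) = 2 ^ j * (φ u * 2 ^ (2 * (k:ℤ))) := by ring
      _ ≤ 2 ^ j * (8 * (C0 + C2)) := mul_le_mul_of_nonneg_left hφu2 hρj.le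
      _ = 8 * (C0 + C2) * 2 ^ j := by ring
  calc ENNReal.ofReal (dilR j (⇑φ) (c - y))
      ≤ (Ioo (c - 2 ^ ((k:ℤ) - j)) (c + 2 ^ ((k:ℤ) - j))).indicator
          (fun _ => ENNReal.ofReal (8 * (C0 + C2) * 2 ^ (j - 2 * (k:ℤ)))) y := by
        rw [Set.indicator_of_mem hmem]
        exact ENNReal.ofReal_le_ofReal hval
    _ ≤ ∑' k' : ℕ, (Ioo (c - 2 ^ ((k':ℤ) - j)) (c + 2 ^ ((k':ℤ) - j))).indicator
          (fun _ => ENNReal.ofReal (8 * (C0 + C2) * 2 ^ (j - 2 * (k':ℤ)))) y :=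
        ENNReal.le_tsum k

/-- Weak-(1,1) bound for the shifted maximal function, with constant `C log(2+|t|)`,
`C` independent of `t`. -/
theorem shiftedMax_weak_l1 (φ : SchwartzMap ℝ ℝ) (hφ : ∀ x, 0 ≤ φ x) :
    ∃ C > (0 : ℝ), ∀ t : ℝ, ∀ f : ℝ → ℂ, Integrable f volume →
      ∀ l : ℝ, 0 < l →
        ENNReal.ofReal l * volume {x : ℝ | ENNReal.ofReal l < shiftedMax (⇑φ) t f x}
          ≤ ENNReal.ofReal (C * Real.log (2 + |t|)) * ∫⁻ y, (‖f y‖₊ : ℝ≥0∞) := by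
  obtain ⟨A, hA, hker⟩ := schwartz_kernel_bound φ hφ
  refine ⟨48 * A * (40 / Real.log 2), by positivity, ?_⟩
  intro t f hf l hl
  set ν := volume.withDensity (fun y => (‖f y‖₊ : ℝ≥0∞)) with hν
  have hden : AEMeasurable (fun y => (‖f y‖₊ : ℝ≥0∞)) volume := (AEStronglyMeasurable.aemeasurable hf.aestronglyMeasurable).nnnorm.coe_nnreal_ennreal
  have hνuniv : ν univ = ∫⁻ y, (‖f y‖₊ : ℝ≥0∞) := by
    rw [hν, withDensity_apply _ MeasurableSet.univ, setLIntegral_univ]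
  have hνfin : IsFiniteMeasure ν := ⟨by rw [hνuniv]; exact hf.2⟩
  set lam : ℕ → ℝ := fun k => l * (3/2)^k / (16 * A) with hlamdef
  have hlampos : ∀ k, 0 < lam k := fun k => by
    simp only [hlamdef]; positivity
  set T : ℕ → Set ℝ := fun k => {x : ℝ | ∃ j : ℤ,
      ENNReal.ofReal (2 * lam k * 2 ^ j) <
        ν (Ioo (x - 2 ^ (-(k:ℤ)) * t * 2 ^ j - 2 ^ j)
               (x - 2 ^ (-(k:ℤ)) * t * 2 ^ j + 2 ^ j))} with hT
  -- inclusion of the level set into the union of the T k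
  have hincl : {x : ℝ | ENNReal.ofReal l < shiftedMax (⇑φ) t f x} ⊆ ⋃ k : ℕ, T k := by
    intro x hx
    simp only [mem_setOf_eq, shiftedMax, lt_iSup_iff] at hx
    obtain ⟨j, hj⟩ := hx
    by_contra hnot
    simp only [mem_iUnion, not_exists] at hnot
    set c : ℝ := x - 2 ^ (-j) * t with hc
    have hcont : Continuous fun y : ℝ => dilR j (⇑φ) (c - y) := by
      unfold dilR
      exact continuous_const.mul (φ.continuous.comp
        (continuous_const.mul (continuous_const.sub continuous_id)))
    have hg : AEMeasurable (fun y : ℝ => ENNReal.ofReal (dilR j (⇑φ) (c - y))) volume :=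
      (ENNReal.measurable_ofReal.comp hcont.measurable).aemeasurable
    have hIj : (∫⁻ y, ENNReal.ofReal (dilR j (⇑φ) (c - y)) * (‖f y‖₊ : ℝ≥0∞))
        = ∫⁻ y, ENNReal.ofReal (dilR j (⇑φ) (c - y)) ∂ν := by
      rw [hν, lintegral_withDensity_eq_lintegral_mul₀ hden hg]
      exact lintegral_congr (fun y => (mul_comm _ _))
    rw [hIj] at hj
    -- bound the nu-integral by the dyadic sums
    have hbound : (∫⁻ y, ENNReal.ofReal (dilR j (⇑φ) (c - y)) ∂ν) ≤
        ∑' k : ℕ, ENNReal.ofReal (A * 2 ^ (j - 2 * (k:ℤ))) *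
          ν (Ioo (c - 2 ^ ((k:ℤ) - j)) (c + 2 ^ ((k:ℤ) - j))) := by
      refine le_trans (lintegral_mono (fun y => hker j c y)) (le_of_eq ?_)
      rw [lintegral_tsum (fun k => ((measurable_const.indicator
        measurableSet_Ioo).aemeasurable))]
      exact tsum_congr (fun k => lintegral_indicator_const measurableSet_Ioo _)
    -- each nu-measure is small since x is in no T k
    have hsmall : ∀ k : ℕ, ν (Ioo (c - 2 ^ ((k:ℤ) - j)) (c + 2 ^ ((k:ℤ) - j)))
        ≤ ENNReal.ofReal (2 * lam k * 2 ^ ((k:ℤ) - j)) := by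
      intro k
      have h1 := hnot k
      simp only [hT, mem_setOf_eq, not_exists, not_lt] at h1
      have h2 := h1 ((k:ℤ) - j)
      have hcenter : x - 2 ^ (-(k:ℤ)) * t * 2 ^ ((k:ℤ) - j) = c := by
        rw [hc]
        have h3 : (2:ℝ) ^ (-(k:ℤ)) * 2 ^ ((k:ℤ) - j) = 2 ^ (-j) := by
          rw [← zpow_add₀ (two_ne_zero : (2:ℝ) ≠ 0)]; congr 1; ring
        have h4 : (2:ℝ) ^ (-(k:ℤ)) * t * 2 ^ ((k:ℤ) - j) = 2 ^ (-j) * t := by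
          calc (2:ℝ) ^ (-(k:ℤ)) * t * 2 ^ ((k:ℤ) - j)
              = ((2:ℝ) ^ (-(k:ℤ)) * 2 ^ ((k:ℤ) - j)) * t := by ring
            _ = 2 ^ (-j) * t := by rw [h3]
        rw [h4]
      rwa [hcenter] at h2
    -- sum the series
    have hterm : ∀ k : ℕ, A * 2 ^ (j - 2 * (k:ℤ)) * (2 * lam k * 2 ^ ((k:ℤ) - j))
        = l/8 * (3/4)^k := by
      intro k
      have hz : (2:ℝ) ^ (j - 2 * (k:ℤ)) * 2 ^ ((k:ℤ) - j) = ((2:ℝ) ^ (k:ℕ))⁻¹ := by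
        rw [← zpow_add₀ (two_ne_zero : (2:ℝ) ≠ 0)]
        have : j - 2 * (k:ℤ) + ((k:ℤ) - j) = -(k:ℤ) := by ring
        rw [this, zpow_neg, zpow_natCast]
      have h2kpos : (0:ℝ) < 2 ^ (k:ℕ) := by positivity
      calc A * 2 ^ (j - 2 * (k:ℤ)) * (2 * lam k * 2 ^ ((k:ℤ) - j))
          = (2 ^ (j - 2 * (k:ℤ)) * 2 ^ ((k:ℤ) - j)) * (2 * A * lam k) := by ring
        _ = ((2:ℝ) ^ (k:ℕ))⁻¹ * (2 * A * (l * (3/2)^k / (16 * A))) := by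
            rw [hz]
        _ = l/8 * (3/4)^k := by
            have e2 : ((2:ℝ)^(k:ℕ))⁻¹ = ((2:ℝ)⁻¹)^(k:ℕ) := by rw [inv_pow]
            have e3 : 2 * A * (l * (3/2)^k / (16*A)) = l/8 * (3/2)^k := by
              field_simp
              ring
            rw [e2, e3]
            calc ((2:ℝ)⁻¹)^(k:ℕ) * (l/8 * (3/2)^k)
                = l/8 * (((2:ℝ)⁻¹)^(k:ℕ) * (3/2)^k) := by ring
              _ = l/8 * (3/4)^k := by rw [← mul_pow]; norm_num
    have hsum : (∑' k : ℕ, ENNReal.ofReal (l/8 * (3/4)^k)) = ENNReal.ofReal (l/2) := by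
      have h34 : ∀ k : ℕ, ENNReal.ofReal (l/8 * (3/4)^k)
          = ENNReal.ofReal (l/8) * (ENNReal.ofReal (3/4))^k := by
        intro k
        rw [ENNReal.ofReal_mul (by positivity), ENNReal.ofReal_pow (by norm_num)]
      rw [tsum_congr h34, ENNReal.tsum_mul_left, ENNReal.tsum_geometric]
      have h14 : (1 : ℝ≥0∞) - ENNReal.ofReal (3/4) = ENNReal.ofReal (1/4) := by
        rw [← ENNReal.ofReal_one, ← ENNReal.ofReal_sub _ (by norm_num : (0:ℝ) ≤ 3/4)]
        norm_num
      rw [h14, ← ENNReal.ofReal_inv_of_pos (by norm_num : (0:ℝ) < 1/4)]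
      rw [← ENNReal.ofReal_mul (by positivity)]
      rw [show l/8 * (1/4:ℝ)⁻¹ = l/2 by ring]
    have hfinal : (∫⁻ y, ENNReal.ofReal (dilR j (⇑φ) (c - y)) ∂ν) ≤ ENNReal.ofReal (l/2) := by
      refine le_trans hbound ?_
      rw [← hsum]
      refine ENNReal.tsum_le_tsum (fun k => ?_)
      calc ENNReal.ofReal (A * 2 ^ (j - 2 * (k:ℤ))) *
            ν (Ioo (c - 2 ^ ((k:ℤ) - j)) (c + 2 ^ ((k:ℤ) - j)))
          ≤ ENNReal.ofReal (A * 2 ^ (j - 2 * (k:ℤ))) *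
            ENNReal.ofReal (2 * lam k * 2 ^ ((k:ℤ) - j)) :=
            mul_le_mul_right (hsmall k) _
        _ = ENNReal.ofReal (A * 2 ^ (j - 2 * (k:ℤ)) * (2 * lam k * 2 ^ ((k:ℤ) - j))) := by
            rw [← ENNReal.ofReal_mul (by positivity)]
        _ = ENNReal.ofReal (l/8 * (3/4)^k) := by rw [hterm k]
    have : ENNReal.ofReal l < ENNReal.ofReal (l/2) := lt_of_lt_of_le hj hfinal
    rw [ENNReal.ofReal_lt_ofReal_iff (by positivity)] at this
    linarith
  -- weak bounds for each T k and summation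
  have hTk : ∀ k : ℕ, ENNReal.ofReal (lam k) * volume (T k) ≤
      ENNReal.ofReal (40 / Real.log 2 * Real.log (2 + |t|)) * ν univ := by
    intro k
    refine le_trans (shifted_weak ν (lam k) (2 ^ (-(k:ℤ)) * t) (hlampos k)) ?_
    apply mul_le_mul_left
    apply ENNReal.ofReal_le_ofReal
    have hlog2 : 0 < Real.log 2 := Real.log_pos one_lt_two
    have habs : |2 ^ (-(k:ℤ)) * t| ≤ |t| := by
      rw [abs_mul, abs_of_pos (zpow_pos (by norm_num : (0:ℝ) < 2) _)]
      have h1 : (2:ℝ) ^ (-(k:ℤ)) ≤ 1 := by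
        have := zpow_le_zpow_right₀ (one_le_two : (1:ℝ) ≤ 2)
          (neg_nonpos.2 (Int.natCast_nonneg k) : -(k:ℤ) ≤ 0)
        rwa [zpow_zero] at this
      nlinarith [abs_nonneg t]
    have hloga : Real.log (2 + |2 ^ (-(k:ℤ)) * t|) ≤ Real.log (2 + |t|) :=
      Real.log_le_log (by positivity) (by linarith)
    exact mul_le_mul_of_nonneg_left hloga (by positivity)
  have hlfac : ∀ k : ℕ, ENNReal.ofReal l
      = ENNReal.ofReal (16 * A * (2/3)^k) * ENNReal.ofReal (lam k) := by
    intro k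
    rw [← ENNReal.ofReal_mul (by positivity)]
    congr 1
    rw [hlamdef]
    field_simp
    rw [← mul_pow]; norm_num
  have hgeo : (∑' k : ℕ, ENNReal.ofReal (16 * A * (2/3)^k)) = ENNReal.ofReal (48 * A) := by
    have h23 : ∀ k : ℕ, ENNReal.ofReal (16 * A * (2/3)^k)
        = ENNReal.ofReal (16 * A) * (ENNReal.ofReal (2/3))^k := by
      intro k
      rw [ENNReal.ofReal_mul (by positivity), ENNReal.ofReal_pow (by norm_num)]
    rw [tsum_congr h23, ENNReal.tsum_mul_left, ENNReal.tsum_geometric]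
    have h13 : (1 : ℝ≥0∞) - ENNReal.ofReal (2/3) = ENNReal.ofReal (1/3) := by
      rw [← ENNReal.ofReal_one, ← ENNReal.ofReal_sub _ (by norm_num : (0:ℝ) ≤ 2/3)]
      norm_num
    rw [h13, ← ENNReal.ofReal_inv_of_pos (by norm_num : (0:ℝ) < 1/3)]
    rw [← ENNReal.ofReal_mul (by positivity)]
    rw [show 16 * A * (1/3:ℝ)⁻¹ = 48 * A by ring]
  calc ENNReal.ofReal l * volume {x : ℝ | ENNReal.ofReal l < shiftedMax (⇑φ) t f x}
      ≤ ENNReal.ofReal l * ∑' k : ℕ, volume (T k) :=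
        mul_le_mul_right ((measure_mono hincl).trans (measure_iUnion_le T)) _
    _ = ∑' k : ℕ, ENNReal.ofReal l * volume (T k) := ENNReal.tsum_mul_left.symm
    _ ≤ ∑' k : ℕ, ENNReal.ofReal (16 * A * (2/3)^k) *
          (ENNReal.ofReal (40 / Real.log 2 * Real.log (2 + |t|)) * ν univ) := by
        refine ENNReal.tsum_le_tsum (fun k => ?_)
        rw [hlfac k, mul_assoc]
        exact mul_le_mul_right (hTk k) _
    _ = (∑' k : ℕ, ENNReal.ofReal (16 * A * (2/3)^k)) *
          (ENNReal.ofReal (40 / Real.log 2 * Real.log (2 + |t|)) * ν univ) :=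
        ENNReal.tsum_mul_right
    _ = ENNReal.ofReal (48 * A) *
          (ENNReal.ofReal (40 / Real.log 2 * Real.log (2 + |t|)) * ν univ) := by rw [hgeo]
    _ = ENNReal.ofReal (48 * A * (40 / Real.log 2) * Real.log (2 + |t|)) * ν univ := by
        rw [← mul_assoc, ← ENNReal.ofReal_mul (by positivity)]
        congr 2
        ring
    _ = ENNReal.ofReal (48 * A * (40 / Real.log 2) * Real.log (2 + |t|)) *
          ∫⁻ y, (‖f y‖₊ : ℝ≥0∞) := by rw [hνuniv]
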